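/- For every k > 0 and b ∈ ℝ, ∫_ℝ (1 + (u − b)²) e^{−k|u|} du = (2/k)(1 + b² + 2/k²). Consequently, for μ ∈ ℝ, σ > 0ortion and a ∈ ℝ, the Bimodal-Unimodal Laplace function f(x) = (k/(σc)) (1 + ((x−μ)/σ − a/σ)²) e^{−k|(x−μ)/σ|} with c = 2(1 + a²/σ² + 2/k²) is a pdf on ℝ. -/

import Mathlib

open MeasureTheory Real Set

lemma bul_integrable_abs_pow (k : ℝ) (hk : 0 < k) (n : ℕ) :
    Integrable (fun x : ℝ => |x| ^ n * Real.exp (-(k * |x|))) := by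
  have hIoi : IntegrableOn (fun x : ℝ => |x| ^ n * Real.exp (-(k * |x|))) (Ioi 0) := by
    have h := integrableOn_rpow_mul_exp_neg_mul_rpow (p := 1) (s := n) (b := k)
      (lt_of_lt_of_le neg_one_lt_zero (Nat.cast_nonneg n)) one_pos hk
    refine (h.congr_fun (fun x hx => ?_) measurableSet_Ioi)
    have hx0 : (0:ℝ) < x := hx
    beta_reduce
    rw [Real.rpow_one, Real.rpow_natCast, abs_of_pos hx0, neg_mul]
  have hIic : IntegrableOn (fun x : ℝ => |x| ^ n * Real.exp (-(k * |x|))) (Iic 0) := by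
    rw [← Measure.map_neg_eq_self (volume : Measure ℝ)]
    have m : MeasurableEmbedding fun x : ℝ => -x := (Homeomorph.neg ℝ).measurableEmbedding
    rw [m.integrableOn_map_iff]
    simp_rw [Function.comp_def, abs_neg, neg_preimage, neg_Iic, neg_zero]
    exact Iff.mpr integrableOn_Ici_iff_integrableOn_Ioi hIoi
  have := hIic.union hIoi
  rwa [Iic_union_Ioi, integrableOn_univ] at this

lemma bul_integrable_exp (k : ℝ) (hk : 0 < k) :
    Integrable (fun x : ℝ => Real.exp (-(k * |x|))) := by
  simpa using bul_integrable_abs_pow k hk 0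

lemma bul_integrable_sq (k : ℝ) (hk : 0 < k) :
    Integrable (fun x : ℝ => x ^ 2 * Real.exp (-(k * |x|))) := by
  have := bul_integrable_abs_pow k hk 2
  simpa [sq_abs] using this

lemma bul_integrable_lin (k : ℝ) (hk : 0 < k) :
    Integrable (fun x : ℝ => x * Real.exp (-(k * |x|))) := by
  refine (bul_integrable_abs_pow k hk 1).mono' ?_ ?_
  · exact (continuous_id.mul (by continuity)).aestronglyMeasurable
  · filter_upwards with x
    rw [Real.norm_eq_abs, abs_mul, abs_exp, pow_one]

lemma bul_J0 (k : ℝ) (hk : 0 < k) :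
    (∫ x : ℝ, Real.exp (-(k * |x|))) = 2 / k := by
  rw [show (∫ x : ℝ, Real.exp (-(k * |x|)))
      = 2 * ∫ x in Ioi (0:ℝ), Real.exp (-(k * x)) from
    integral_comp_abs (f := fun t => Real.exp (-(k * t)))]
  have h := Real.integral_rpow_mul_exp_neg_mul_Ioi (a := 1) (r := k) one_pos hk
  simp only [sub_self, Real.rpow_zero, one_mul, Real.rpow_one, Real.Gamma_one, mul_one] at h
  rw [h]; ring

lemma bul_J1 (k : ℝ) (hk : 0 < k) :
    (∫ x : ℝ, x * Real.exp (-(k * |x|))) = 0 := by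
  have h := integral_neg_eq_self (fun x : ℝ => x * Real.exp (-(k * |x|))) volume
  simp only [abs_neg, neg_mul] at h
  rw [integral_neg] at h
  linarith

lemma bul_J2 (k : ℝ) (hk : 0 < k) :
    (∫ x : ℝ, x ^ 2 * Real.exp (-(k * |x|))) = 4 / k ^ 3 := by
  have habs : (∫ x : ℝ, x ^ 2 * Real.exp (-(k * |x|)))
      = ∫ x : ℝ, |x| ^ 2 * Real.exp (-(k * |x|)) := by
    congr 1; funext x; rw [sq_abs]
  rw [habs, show (∫ x : ℝ, |x| ^ 2 * Real.exp (-(k * |x|)))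
      = 2 * ∫ x in Ioi (0:ℝ), x ^ 2 * Real.exp (-(k * x)) from
    integral_comp_abs (f := fun t => t ^ 2 * Real.exp (-(k * t)))]
  have h := Real.integral_rpow_mul_exp_neg_mul_Ioi (a := 3) (r := k) (by norm_num) hk
  have e1 : ∀ t ∈ Ioi (0:ℝ), t ^ ((3:ℝ) - 1) * Real.exp (-(k * t))
      = t ^ 2 * Real.exp (-(k * t)) := by
    intro t ht
    rw [show (3:ℝ) - 1 = ((2:ℕ):ℝ) by norm_num, Real.rpow_natCast]
  rw [setIntegral_congr_fun measurableSet_Ioi e1] at h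
  have hg : Real.Gamma 3 = 2 := by
    rw [show (3:ℝ) = ((2:ℕ):ℝ) + 1 by norm_num, Real.Gamma_nat_eq_factorial]
    norm_num
  rw [h, hg, show ((1:ℝ) / k) ^ (3:ℝ) = 1 / k ^ 3 by
    rw [show (3:ℝ) = ((3:ℕ):ℝ) by norm_num, Real.rpow_natCast, div_pow, one_pow]]
  ring

lemma bul_main (k : ℝ) (hk : 0 < k) (b : ℝ) :
    (∫ u, (1 + (u - b) ^ 2) * Real.exp (-(k * |u|)))
      = (2 / k) * (1 + b ^ 2 + 2 / k ^ 2) := by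
  have heq : (fun u : ℝ => (1 + (u - b) ^ 2) * Real.exp (-(k * |u|)))
      = fun u => ((1 + b ^ 2) * Real.exp (-(k * |u|)) + u ^ 2 * Real.exp (-(k * |u|)))
        + (-2 * b) * (u * Real.exp (-(k * |u|))) := by
    funext u; ring
  have h1 : Integrable (fun u : ℝ => (1 + b ^ 2) * Real.exp (-(k * |u|))
      + u ^ 2 * Real.exp (-(k * |u|))) := by
    exact ((bul_integrable_exp k hk).const_mul _).add (bul_integrable_sq k hk)
  rw [heq, integral_add h1 ((bul_integrable_lin k hk).const_mul _),
    integral_add ((bul_integrable_exp k hk).const_mul _) (bul_integrable_sq k hk),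
    integral_const_mul, integral_const_mul, bul_J0 k hk, bul_J1 k hk, bul_J2 k hk]
  have hk' : k ≠ 0 := hk.ne'
  field_simp
  ring

theorem stmt_10 (k : ℝ) (hk : 0 < k) :
    (∀ b : ℝ, (∫ u, (1 + (u - b) ^ 2) * Real.exp (-(k * |u|)))
        = (2 / k) * (1 + b ^ 2 + 2 / k ^ 2)) ∧
      ∀ (μ σ a : ℝ), 0 < σ →
        let c : ℝ := 2 * (1 + a ^ 2 / σ ^ 2 + 2 / k ^ 2)
        let f : ℝ → ℝ := fun x =>
          k / (σ * c) * (1 + ((x - μ) / σ - a / σ) ^ 2) *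
            Real.exp (-(k * |(x - μ) / σ|))
        (∀ x, 0 ≤ f x) ∧ (∫ x, f x) = 1 := by
  refine ⟨bul_main k hk, ?_⟩
  intro μ σ a hσ c f
  have hc : 0 < c := by
    have h1 : 0 < 1 + a ^ 2 / σ ^ 2 + 2 / k ^ 2 := by positivity
    simpa [c] using by linarith
  constructor
  · intro x
    show 0 ≤ k / (σ * c) * (1 + ((x - μ) / σ - a / σ) ^ 2) *
        Real.exp (-(k * |(x - μ) / σ|))
    have h0 : 0 ≤ k / (σ * c) := div_nonneg hk.le (mul_nonneg hσ.le hc.le)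
    have h1 : 0 ≤ 1 + ((x - μ) / σ - a / σ) ^ 2 := by positivity
    exact mul_nonneg (mul_nonneg h0 h1) (Real.exp_pos _).le
  · show (∫ x, k / (σ * c) * (1 + ((x - μ) / σ - a / σ) ^ 2) *
        Real.exp (-(k * |(x - μ) / σ|))) = 1
    simp_rw [mul_assoc]
    rw [integral_const_mul]
    set g : ℝ → ℝ := fun u => (1 + (u - a / σ) ^ 2) * Real.exp (-(k * |u|)) with hg
    have key : (∫ x : ℝ, (1 + ((x - μ) / σ - a / σ) ^ 2) *
        Real.exp (-(k * |(x - μ) / σ|)))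
        = σ * ((2 / k) * (1 + (a / σ) ^ 2 + 2 / k ^ 2)) := by
      have e1 : (∫ x : ℝ, (1 + ((x - μ) / σ - a / σ) ^ 2) *
          Real.exp (-(k * |(x - μ) / σ|)))
          = ∫ x : ℝ, (fun y => g (y - μ / σ)) (x / σ) := by
        congr 1; funext x
        simp only [hg, sub_div]
      rw [e1, Measure.integral_comp_div (fun y => g (y - μ / σ)) σ,
        integral_sub_right_eq_self g (μ / σ), abs_of_pos hσ, smul_eq_mul,
        bul_main k hk (a / σ)]
    rw [key]
    have hσ' : σ ≠ 0 := hσ.ne'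
    have hk' : k ≠ 0 := hk.ne'
    have hc' : c ≠ 0 := hc.ne'
    show k / (σ * c) * (σ * (2 / k * (1 + (a / σ) ^ 2 + 2 / k ^ 2))) = 1
    rw [show c = 2 * (1 + a ^ 2 / σ ^ 2 + 2 / k ^ 2) from rfl] at hc' ⊢
    field_simp
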